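/- For every odd prime p and every integer k ≥ 1, the number of isomorphism classes of paramedial quasigroups admitting an affine form over the cyclic group ℤ/p^k is 2p^k − p^{k−1} + ∑_{i=0}^{k−2} p^i. -/

import Mathlib

/-- `op` is a quasigroup operation: all left and right translations are bijective. -/
def IsQuasigroupOp {Q : Type*} (op : Q → Q → Q) : Prop :=
  (∀ a : Q, Function.Bijective fun x => op a x) ∧
  (∀ a : Q, Function.Bijective fun x => op x a)

/-- Isomorphism of binary structures: a bijection commuting with the operations. -/
def OpIso {A B : Type*} (op₁ : A → A → A) (op₂ : B → B → B) : Prop :=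
  ∃ f : A ≃ B, ∀ x y, f (op₁ x y) = op₂ (f x) (f y)

/-- The affine operation `x * y = φ(x) + ψ(y) + c` over an abelian group. -/
def affOp {G : Type*} [AddCommGroup G] (φ ψ : G ≃+ G) (c : G) : G → G → G :=
  fun x y => φ x + ψ y + c

/-- `op` is an affine form of a paramedial quasigroup over `G`:
`op = affOp φ ψ c` for automorphisms with `φ² = ψ²` (Němec–Kepka). -/
def IsAffineParamedialOp {G : Type*} [AddCommGroup G] (op : G → G → G) : Prop :=
  ∃ (φ ψ : G ≃+ G) (c : G), (∀ x, φ (φ x) = ψ (ψ x)) ∧ op = affOp φ ψ c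

/-- `pqG G` is the number of isomorphism classes of paramedial quasigroups
admitting an affine form over `G`. -/
noncomputable def pqG (G : Type*) [AddCommGroup G] : ℕ :=
  Nat.card (Quot fun o₁ o₂ : {op : G → G → G // IsAffineParamedialOp op} =>
    OpIso o₁.1 o₂.1)


namespace PQ

variable (p k : ℕ)

/-- p-adic valuation on `ZMod (p^k)`, with `val 0 = k`. -/
def val (x : ZMod (p^k)) : ℕ := if x = 0 then k else x.val.factorization p

variable [hp : Fact p.Prime]

lemma pk_pos : 0 < p ^ k := pow_pos hp.out.pos k

instance : NeZero (p ^ k) := ⟨(pk_pos p k).ne'⟩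

variable {p k}

lemma val_le (x : ZMod (p^k)) : val p k x ≤ k := by
  unfold val
  split
  · exact le_refl k
  · rename_i h
    by_contra hlt
    have hv : x.val ≠ 0 := fun h0 => h ((ZMod.val_eq_zero x).mp h0)
    have : p ^ k ∣ x.val :=
      (hp.out.pow_dvd_iff_le_factorization hv).mpr (by omega)
    exact absurd (Nat.le_of_dvd (Nat.pos_of_ne_zero hv) this) (not_le.mpr (ZMod.val_lt x))

lemma val_zero' : val p k (0 : ZMod (p^k)) = k := by simp [val]

/-- Every element is a unit times `p^(val x)`. -/
lemma val_spec (x : ZMod (p^k)) :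
    ∃ u : (ZMod (p^k))ˣ, x = (u : ZMod (p^k)) * (p : ZMod (p^k)) ^ (val p k x) := by
  by_cases h0 : x = 0
  · refine ⟨1, ?_⟩
    subst h0
    rw [val_zero']
    rw [show ((p : ZMod (p^k)))^k = ((p^k : ℕ) : ZMod (p^k)) by push_cast; ring,
      ZMod.natCast_self, mul_zero]
  · set n := x.val with hn
    have hv : n ≠ 0 := fun h0' => h0 ((ZMod.val_eq_zero x).mp h0')
    set t := n.factorization p with ht
    have hval : val p k x = t := by simp [val, h0, ht]; rfl
    have hfac : p ^ t * (n / p ^ t) = n := Nat.ordProj_mul_ordCompl_eq_self n p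
    have hnd : ¬ p ∣ (n / p ^ t) := Nat.not_dvd_ordCompl hp.out hv
    have hcop : Nat.Coprime (n / p ^ t) (p ^ k) := by
      apply Nat.Coprime.pow_right
      rw [Nat.coprime_comm]
      exact (hp.out.coprime_iff_not_dvd).mpr hnd
    set m := n / p ^ t with hm
    have hu : IsUnit ((m : ℕ) : ZMod (p^k)) := (ZMod.isUnit_iff_coprime _ _).mpr hcop
    refine ⟨hu.unit, ?_⟩
    rw [hval, IsUnit.unit_spec]
    have hx : x = ((n : ℕ) : ZMod (p^k)) := by
      rw [hn, ZMod.natCast_val, ZMod.cast_id]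
    rw [hx, ← hfac]
    push_cast
    ring

end PQ

namespace PQ
variable {p k : ℕ} [hp : Fact p.Prime]

lemma p_pow_zmod_eq_zero {t : ℕ} (ht : k ≤ t) : ((p : ZMod (p^k)))^t = 0 := by
  have : ((p : ZMod (p^k)))^t = ((p^k : ℕ) : ZMod (p^k)) * ((p : ZMod (p^k)))^(t - k) := by
    push_cast
    rw [← pow_add]
    congr 1
    omega
  rw [this, ZMod.natCast_self, zero_mul]

lemma p_pow_zmod_ne_zero {t : ℕ} (ht : t < k) : ((p : ZMod (p^k)))^t ≠ 0 := by
  intro h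
  have h2 : ((p^t : ℕ) : ZMod (p^k)) = 0 := by push_cast; exact h
  rw [ZMod.natCast_eq_zero_iff] at h2
  have := Nat.le_of_dvd (pow_pos hp.out.pos t) h2
  exact absurd this (not_le.mpr (Nat.pow_lt_pow_right hp.out.one_lt ht))

lemma coe_unit_not_dvd (hk : 1 ≤ k) (u : (ZMod (p^k))ˣ) : ¬ p ∣ (u : ZMod (p^k)).val := by
  intro hdvd
  have h1 : IsUnit (((u : ZMod (p^k)).val : ℕ) : ZMod (p^k)) := by
    rw [ZMod.natCast_val, ZMod.cast_id]
    exact u.isUnit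
  have h2 := (ZMod.isUnit_iff_coprime _ _).mp h1
  have h3 : Nat.Coprime (u : ZMod (p^k)).val p :=
    Nat.Coprime.coprime_dvd_right (dvd_pow_self p (by omega)) h2
  exact hp.out.ne_one (Nat.Coprime.eq_one_of_dvd h3.symm hdvd)

lemma val_unit_mul_pow (hk : 1 ≤ k) (u : (ZMod (p^k))ˣ) (t : ℕ) :
    val p k ((u : ZMod (p^k)) * (p : ZMod (p^k))^t) = min t k := by
  rcases le_or_gt k t with h | h
  · rw [p_pow_zmod_eq_zero h, mul_zero, val_zero']
    omega
  · set x := (u : ZMod (p^k)) * (p : ZMod (p^k))^t with hx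
    have hx0 : x ≠ 0 := by
      intro h0
      have : ((p : ZMod (p^k)))^t = 0 := by
        have := congrArg (fun z => ((u⁻¹ : (ZMod (p^k))ˣ) : ZMod (p^k)) * z) h0
        simpa [hx, ← mul_assoc] using this
      exact p_pow_zmod_ne_zero h this
    set m := (u : ZMod (p^k)).val with hm
    have hxval : x = ((m * p^t : ℕ) : ZMod (p^k)) := by
      push_cast
      rw [hx, hm, ZMod.natCast_val, ZMod.cast_id]
    have hval_eq : x.val = (m * p^t) % (p^k) := by rw [hxval, ZMod.val_natCast]
    have hvne : x.val ≠ 0 := fun h0 => hx0 ((ZMod.val_eq_zero x).mp h0)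
    have hdvd1 : p^t ∣ x.val := by
      rw [hval_eq]
      rw [Nat.dvd_mod_iff (pow_dvd_pow p h.le)]
      exact dvd_mul_left (p^t) m
    have hndvd : ¬ p^(t+1) ∣ x.val := by
      rw [hval_eq, Nat.dvd_mod_iff (pow_dvd_pow p (by omega))]
      rw [pow_succ]
      intro hd
      have : p ∣ m := by
        rcases hd with ⟨c, hc⟩
        have h5 : p^t * m = p^t * (p * c) := by rw [mul_comm (p^t) m, hc]; ring
        have hm' := Nat.eq_of_mul_eq_mul_left (pow_pos hp.out.pos t) h5
        exact ⟨c, hm'⟩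
      exact coe_unit_not_dvd hk u this
    have hfac : x.val.factorization p = t := by
      have h1 : t ≤ x.val.factorization p :=
        (hp.out.pow_dvd_iff_le_factorization hvne).mp hdvd1
      have h2 : ¬ (t + 1 ≤ x.val.factorization p) := fun hle =>
        hndvd ((hp.out.pow_dvd_iff_le_factorization hvne).mpr hle)
      omega
    rw [val]
    simp only [hx0, if_false]
    omega

lemma val_mul_unit (hk : 1 ≤ k) (u : (ZMod (p^k))ˣ) (x : ZMod (p^k)) :
    val p k ((u : ZMod (p^k)) * x) = val p k x := by
  obtain ⟨w, hw⟩ := val_spec x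
  set s := val p k x with hs
  rw [hw]
  have h2 : (u : ZMod (p^k)) * ((w : ZMod (p^k)) * (p : ZMod (p^k))^s)
      = ((u*w : (ZMod (p^k))ˣ) : ZMod (p^k)) * (p : ZMod (p^k))^s := by
    push_cast; ring
  rw [h2, val_unit_mul_pow hk]
  have h3 : s ≤ k := by rw [hs]; exact val_le x
  omega

lemma val_p_pow_mul (hk : 1 ≤ k) (t : ℕ) (x : ZMod (p^k)) :
    val p k ((p : ZMod (p^k))^t * x) = min (t + val p k x) k := by
  obtain ⟨w, hw⟩ := val_spec x
  set s := val p k x with hs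
  calc val p k ((p : ZMod (p^k))^t * x)
      = val p k ((w : ZMod (p^k)) * (p : ZMod (p^k))^(t + s)) := by
        rw [hw, pow_add]; ring_nf
    _ = min (t + s) k := val_unit_mul_pow hk _ _

lemma isUnit_iff_val_eq_zero (hk : 1 ≤ k) (x : ZMod (p^k)) :
    IsUnit x ↔ val p k x = 0 := by
  constructor
  · rintro ⟨u, rfl⟩
    have := val_unit_mul_pow hk u 0
    simpa using this
  · intro h
    obtain ⟨w, hw⟩ := val_spec x
    rw [h, pow_zero, mul_one] at hw
    exact hw ▸ w.isUnit

lemma val_neg (hk : 1 ≤ k) (x : ZMod (p^k)) : val p k (-x) = val p k x := by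
  have := val_mul_unit hk (-1 : (ZMod (p^k))ˣ) x
  simpa using this

lemma val_add_ge (hk : 1 ≤ k) (x y : ZMod (p^k)) :
    min (val p k x) (val p k y) ≤ val p k (x + y) := by
  have key : ∀ x y : ZMod (p^k), val p k x ≤ val p k y →
      min (val p k x) (val p k y) ≤ val p k (x + y) := by
    intro x y h
    obtain ⟨u, hu⟩ := val_spec x
    obtain ⟨w, hw⟩ := val_spec y
    set s := val p k x with hs
    set t := val p k y with ht
    have hxy : x + y = (p : ZMod (p^k))^s *
        ((u : ZMod (p^k)) + (w : ZMod (p^k)) * (p : ZMod (p^k))^(t - s)) := by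
      rw [hu, hw]
      have h2 : s + (t - s) = t := by omega
      rw [mul_add, ← mul_assoc, mul_comm ((p : ZMod (p^k))^s) (w : ZMod (p^k)),
        mul_assoc, ← pow_add, h2]
      ring
    rw [hxy, val_p_pow_mul hk]
    have hsk : s ≤ k := hs ▸ val_le x
    omega
  rcases le_total (val p k x) (val p k y) with h | h
  · exact key x y h
  · have := key y x h
    rw [add_comm y x] at this
    omega

lemma val_add_eq (hk : 1 ≤ k) (x y : ZMod (p^k)) (h : val p k x < val p k y) :
    val p k (x + y) = val p k x := by
  have h1 := val_add_ge hk x y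
  have h2 : val p k x = val p k ((x + y) + (-y)) := by ring_nf
  have h3 := val_add_ge hk (x + y) (-y)
  rw [val_neg hk] at h3
  rw [← h2] at h3
  omega

end PQ

namespace PQ

/-- An additive bijection of `ZMod n` is multiplication by a unit. -/
lemma additive_bij_is_unit_mul {n : ℕ} [NeZero n] (g : ZMod n → ZMod n)
    (hadd : ∀ x y, g (x + y) = g x + g y) (hbij : Function.Bijective g) :
    ∃ u : (ZMod n)ˣ, ∀ x, g x = (u : ZMod n) * x := by
  have h0 : g 0 = 0 := by
    have h := hadd 0 0
    rw [add_zero] at h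
    have h2 : g 0 + 0 = g 0 + g 0 := by rw [add_zero]; exact h
    exact (add_left_cancel h2).symm
  have hnat : ∀ m : ℕ, g ((m : ZMod n)) = (m : ZMod n) * g 1 := by
    intro m
    induction m with
    | zero => simpa using h0
    | succ i ih =>
        push_cast
        rw [hadd, ih]
        ring
  have hall : ∀ x : ZMod n, g x = x * g 1 := by
    intro x
    have hx : ((x.val : ℕ) : ZMod n) = x := by
      rw [ZMod.natCast_val, ZMod.cast_id]
    rw [← hx, hnat]
  have hu : IsUnit (g 1) := by
    obtain ⟨s, hs⟩ := hbij.2 1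
    rw [hall s] at hs
    exact IsUnit.of_mul_eq_one _ (by rw [mul_comm] at hs; exact hs)
  exact ⟨hu.unit, fun x => by rw [hall, IsUnit.unit_spec, mul_comm]⟩

/-- Multiplication by a unit as an additive equivalence. -/
def mulUnit {n : ℕ} (u : (ZMod n)ˣ) : ZMod n ≃+ ZMod n where
  toFun x := (u : ZMod n) * x
  invFun y := ((u⁻¹ : (ZMod n)ˣ) : ZMod n) * y
  left_inv x := by simp [← mul_assoc]
  right_inv y := by simp [← mul_assoc]
  map_add' x y := mul_add _ _ _

@[simp] lemma mulUnit_apply {n : ℕ} (u : (ZMod n)ˣ) (x : ZMod n) :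
    mulUnit u x = (u : ZMod n) * x := rfl

/-- The affine map `x ↦ u x + d` as an `Equiv`. -/
def affEquiv {n : ℕ} (u : (ZMod n)ˣ) (d : ZMod n) : ZMod n ≃ ZMod n where
  toFun x := (u : ZMod n) * x + d
  invFun y := ((u⁻¹ : (ZMod n)ˣ) : ZMod n) * (y - d)
  left_inv x := by simp [← mul_assoc]
  right_inv y := by
    simp only [Units.mul_inv_cancel_left]
    exact sub_add_cancel y d


@[simp] lemma affEquiv_apply {n : ℕ} (u : (ZMod n)ˣ) (d : ZMod n) (x : ZMod n) :
    affEquiv u d x = (u : ZMod n) * x + d := rfl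

end PQ

namespace PQ

section General

variable {A B C : Type*}

lemma OpIso.refl (op : A → A → A) : OpIso op op := ⟨Equiv.refl A, fun _ _ => rfl⟩

lemma OpIso.symm {op₁ : A → A → A} {op₂ : B → B → B} (h : OpIso op₁ op₂) : OpIso op₂ op₁ := by
  obtain ⟨f, hf⟩ := h
  refine ⟨f.symm, fun x y => ?_⟩
  apply f.injective
  rw [Equiv.apply_symm_apply]
  rw [hf, Equiv.apply_symm_apply, Equiv.apply_symm_apply]

lemma OpIso.trans {op₁ : A → A → A} {op₂ : B → B → B} {op₃ : C → C → C}
    (h₁ : OpIso op₁ op₂) (h₂ : OpIso op₂ op₃) : OpIso op₁ op₃ := by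
  obtain ⟨f, hf⟩ := h₁
  obtain ⟨g, hg⟩ := h₂
  exact ⟨f.trans g, fun x y => by simp [hf, hg]⟩

end General

/-- Commutative ("medial") form: `x*y = a x + a y + c`. -/
def cform {n : ℕ} (a : (ZMod n)ˣ) (c : ZMod n) : ZMod n → ZMod n → ZMod n :=
  fun x y => (a : ZMod n) * x + (a : ZMod n) * y + c

/-- Non-commutative form: `x*y = a x - a y + c`. -/
def nform {n : ℕ} (a : (ZMod n)ˣ) (c : ZMod n) : ZMod n → ZMod n → ZMod n :=
  fun x y => (a : ZMod n) * x - (a : ZMod n) * y + c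

end PQ

namespace PQ

variable {p k : ℕ} [hp : Fact p.Prime]

lemma two_isUnit (hodd : Odd p) : IsUnit (2 : ZMod (p^k)) := by
  have h2 : ((2 : ℕ) : ZMod (p^k)) = (2 : ZMod (p^k)) := by push_cast; rfl
  rw [← h2]
  rw [ZMod.isUnit_iff_coprime]
  apply Nat.Coprime.pow_right
  rw [Nat.prime_two.coprime_iff_not_dvd]
  rcases hodd with ⟨m, hm⟩
  omega

lemma nontrivial_zmod (hk : 1 ≤ k) : Nontrivial (ZMod (p^k)) := by
  haveI : Fact (1 < p^k) := ⟨Nat.one_lt_pow (by omega) hp.out.one_lt⟩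
  infer_instance

/-- Units with equal squares coincide up to sign (p odd). -/
lemma sq_eq_iff (hk : 1 ≤ k) (hodd : Odd p) (u w : (ZMod (p^k))ˣ)
    (h : (u : ZMod (p^k)) * u = (w : ZMod (p^k)) * w) :
    (w : ZMod (p^k)) = u ∨ (w : ZMod (p^k)) = -(u : ZMod (p^k)) := by
  set x := (u : ZMod (p^k)) - w with hx
  set y := (u : ZMod (p^k)) + w with hy
  have hxy : x * y = 0 := by
    rw [hx, hy]
    have : ((u : ZMod (p^k)) - w) * ((u : ZMod (p^k)) + w)
        = (u : ZMod (p^k)) * u - (w : ZMod (p^k)) * w := by ring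
    rw [this, h, sub_self]
  have hsum : x + y = 2 * u := by rw [hx, hy]; ring
  have hsum_unit : IsUnit (x + y) := by
    rw [hsum]
    exact (two_isUnit hodd).mul u.isUnit
  have hval_sum : val p k (x + y) = 0 := (isUnit_iff_val_eq_zero hk _).mp hsum_unit
  have hmin := val_add_ge hk x y
  rw [hval_sum] at hmin
  obtain ⟨ux, hux⟩ := val_spec x
  obtain ⟨uy, huy⟩ := val_spec y
  set s := val p k x with hs
  set t := val p k y with ht
  have hst : s + t ≥ k := by
    have h1 : x * y = ((ux * uy : (ZMod (p^k))ˣ) : ZMod (p^k)) * (p : ZMod (p^k))^(s + t) := by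
      rw [hux, huy, pow_add]; push_cast; ring
    have h2 : val p k (x * y) = min (s + t) k := by rw [h1]; exact val_unit_mul_pow hk _ _
    rw [hxy, val_zero'] at h2
    omega
  have hsk : s ≤ k := hs ▸ val_le x
  have htk : t ≤ k := ht ▸ val_le y
  have hcase : s = 0 ∨ t = 0 := by omega
  rcases hcase with h0 | h0
  · have htk' : k ≤ t := by omega
    have hy0 : y = 0 := by rw [huy, p_pow_zmod_eq_zero htk', mul_zero]
    right
    rw [hy] at hy0
    exact eq_neg_of_add_eq_zero_right hy0
  · have hsk' : k ≤ s := by omega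
    have hx0 : x = 0 := by rw [hux, p_pow_zmod_eq_zero hsk', mul_zero]
    left
    rw [hx] at hx0
    exact (sub_eq_zero.mp hx0).symm

end PQ

namespace PQ

variable {p k : ℕ} [hp : Fact p.Prime]

lemma isAPO_cform (a : (ZMod (p^k))ˣ) (c : ZMod (p^k)) :
    IsAffineParamedialOp (cform a c) := by
  refine ⟨mulUnit a, mulUnit a, c, fun x => rfl, ?_⟩
  funext x y
  simp [cform, affOp]

lemma isAPO_nform (a : (ZMod (p^k))ˣ) (c : ZMod (p^k)) :
    IsAffineParamedialOp (nform a c) := by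
  refine ⟨mulUnit a, mulUnit (-a), c, fun x => ?_, ?_⟩
  · simp only [mulUnit_apply, Units.val_neg]
    ring
  · funext x y
    simp [nform, affOp]
    ring

lemma forms_exhaust (hk : 1 ≤ k) (hodd : Odd p) {op : ZMod (p^k) → ZMod (p^k) → ZMod (p^k)}
    (h : IsAffineParamedialOp op) :
    ∃ (a : (ZMod (p^k))ˣ) (c : ZMod (p^k)), op = cform a c ∨ op = nform a c := by
  obtain ⟨φ, ψ, c, hsq, hop⟩ := h
  obtain ⟨u, hu⟩ := additive_bij_is_unit_mul φ (map_add φ) φ.bijective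
  obtain ⟨w, hw⟩ := additive_bij_is_unit_mul ψ (map_add ψ) ψ.bijective
  have husq : (u : ZMod (p^k)) * u = (w : ZMod (p^k)) * w := by
    have h1 := hsq 1
    rw [hu, hu, hw, hw] at h1
    calc (u : ZMod (p^k)) * u = (u : ZMod (p^k)) * ((u : ZMod (p^k)) * 1) := by ring
      _ = (w : ZMod (p^k)) * ((w : ZMod (p^k)) * 1) := h1
      _ = (w : ZMod (p^k)) * w := by ring
  rcases sq_eq_iff hk hodd u w husq with hcase | hcase
  · refine ⟨u, c, Or.inl ?_⟩
    rw [hop]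
    funext x y
    simp [affOp, cform, hu, hw, hcase]
  · refine ⟨u, c, Or.inr ?_⟩
    rw [hop]
    funext x y
    simp [affOp, nform, hu, hw, hcase]
    ring

end PQ

namespace PQ

variable {p k : ℕ} [hp : Fact p.Prime]

/-- From an isomorphism of commutative forms, extract affinity. -/
lemma cform_iso_affine (a a' : (ZMod (p^k))ˣ) (c c' : ZMod (p^k))
    (h : OpIso (cform a c) (cform a' c')) :
    a = a' ∧ ∃ (u : (ZMod (p^k))ˣ) (d : ZMod (p^k)),
      c' = (u : ZMod (p^k)) * c + (1 - 2 * (a : ZMod (p^k))) * d := by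
  obtain ⟨f, hf⟩ := h
  simp only [cform] at hf
  -- transformed functional equation
  have H : ∀ u v : ZMod (p^k), f (u + v + c)
      = (a' : ZMod (p^k)) * f ((↑a⁻¹ : ZMod (p^k)) * u)
        + (a' : ZMod (p^k)) * f ((↑a⁻¹ : ZMod (p^k)) * v) + c' := by
    intro u v
    have := hf ((↑a⁻¹ : ZMod (p^k)) * u) ((↑a⁻¹ : ZMod (p^k)) * v)
    rwa [Units.mul_inv_cancel_left, Units.mul_inv_cancel_left] at this
  set A : ZMod (p^k) → ZMod (p^k) :=
    fun u => (a' : ZMod (p^k)) * f ((↑a⁻¹ : ZMod (p^k)) * u) with hA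
  have hA2 : ∀ u v, f (u + v + c) = A u + A v + c' := H
  have hA1 : ∀ u, f (u + c) = A u + A 0 + c' := by
    intro u
    have := hA2 u 0
    rwa [add_zero] at this
  have hC : f c = A 0 + A 0 + c' := by
    have := hA2 0 0
    rwa [add_zero, zero_add] at this
  set g : ZMod (p^k) → ZMod (p^k) := fun t => f (t + c) - f c with hg
  have hgadd : ∀ x y, g (x + y) = g x + g y := by
    intro x y
    simp only [hg]
    rw [hA2 x y, hA1 x, hA1 y, hC]
    ring
  have hgbij : Function.Bijective g := by
    constructor
    · intro t₁ t₂ ht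
      simp only [hg] at ht
      have h2 : f (t₁ + c) = f (t₂ + c) := by
        have := sub_left_inj.mp ht
        exact this
      have := f.injective h2
      exact add_right_cancel this
    · intro y
      refine ⟨f.symm (y + f c) - c, ?_⟩
      simp only [hg, sub_add_cancel, Equiv.apply_symm_apply, add_sub_cancel_right]
  obtain ⟨w, hw⟩ := additive_bij_is_unit_mul g hgadd hgbij
  have hfx : ∀ x, f x = (w : ZMod (p^k)) * (x - c) + f c := by
    intro x
    have := hw (x - c)
    simp only [hg, sub_add_cancel] at this
    have h2 := congrArg (· + f c) this
    simpa [sub_add_cancel] using h2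
  -- derive a = a'
  have key1 := hf 1 0
  have key0 := hf 0 0
  rw [mul_one, mul_zero, add_zero] at key1
  rw [mul_zero, add_zero, zero_add] at key0
  have hfac : f ((a : ZMod (p^k)) + c) = (w : ZMod (p^k)) * a + f c := by
    rw [hfx ((a : ZMod (p^k)) + c)]
    ring_nf
  have hf1 : f 1 = (w : ZMod (p^k)) * (1 - c) + f c := hfx 1
  have hf0 : f 0 = (w : ZMod (p^k)) * (0 - c) + f c := hfx 0
  have haa : (w : ZMod (p^k)) * a = (a' : ZMod (p^k)) * w := by
    have e1 : (w : ZMod (p^k)) * a + f c = (a' : ZMod (p^k)) * f 1 + (a' : ZMod (p^k)) * f 0 + c' := by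
      rw [← hfac]; exact key1
    have e0 : f c = (a' : ZMod (p^k)) * f 0 + (a' : ZMod (p^k)) * f 0 + c' := key0
    rw [hf1, hf0] at e1
    rw [hf0] at e0
    linear_combination e1 - e0
  have haa' : a = a' := by
    have h2 : w * a = a' * w := Units.ext (by
      rw [Units.val_mul, Units.val_mul]; exact haa)
    rw [mul_comm a' w] at h2
    exact mul_left_cancel h2
  refine ⟨haa', w, f c - (w : ZMod (p^k)) * c, ?_⟩
  -- c' = w c + (1 - 2a)(f c - w c), from key0
  rw [hf0] at key0
  rw [← haa'] at key0
  linear_combination -key0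

end PQ

namespace PQ

variable {p k : ℕ} [hp : Fact p.Prime]

lemma nform_iso_eq (a a' : (ZMod (p^k))ˣ) (c c' : ZMod (p^k))
    (h : OpIso (nform a c) (nform a' c')) : a = a' := by
  obtain ⟨f, hf⟩ := h
  simp only [nform] at hf
  have H : ∀ u v : ZMod (p^k), f (u - v + c)
      = (a' : ZMod (p^k)) * f ((↑a⁻¹ : ZMod (p^k)) * u)
        - (a' : ZMod (p^k)) * f ((↑a⁻¹ : ZMod (p^k)) * v) + c' := by
    intro u v
    have := hf ((↑a⁻¹ : ZMod (p^k)) * u) ((↑a⁻¹ : ZMod (p^k)) * v)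
    rwa [Units.mul_inv_cancel_left, Units.mul_inv_cancel_left] at this
  set A : ZMod (p^k) → ZMod (p^k) :=
    fun u => (a' : ZMod (p^k)) * f ((↑a⁻¹ : ZMod (p^k)) * u) with hA
  have hA2 : ∀ u v, f (u - v + c) = A u - A v + c' := H
  have hA1 : ∀ u, f (u + c) = A u - A 0 + c' := by
    intro u
    have := hA2 u 0
    rwa [sub_zero] at this
  have hC : f c = c' := by
    have h := hA2 0 0
    rw [sub_zero, sub_self, zero_add] at h
    rw [zero_add] at h
    exact h
  set g : ZMod (p^k) → ZMod (p^k) := fun t => f (t + c) - f c with hg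
  have hgsub : ∀ u v, g (u - v) = g u - g v := by
    intro u v
    simp only [hg]
    rw [hA2 u v, hA1 u, hA1 v, hC]
    ring
  have hg0 : g 0 = 0 := by
    have h := hgsub 0 0
    rw [sub_self] at h
    rw [h]
    exact sub_self _
  have hgadd : ∀ x y, g (x + y) = g x + g y := by
    intro x y
    have h1 : x + y = x - (0 - y) := by ring
    rw [h1, hgsub, hgsub, hg0]
    ring
  have hgbij : Function.Bijective g := by
    constructor
    · intro t₁ t₂ ht
      simp only [hg] at ht
      have h2 : f (t₁ + c) = f (t₂ + c) := sub_left_inj.mp ht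
      exact add_right_cancel (f.injective h2)
    · intro y
      refine ⟨f.symm (y + f c) - c, ?_⟩
      simp only [hg, sub_add_cancel, Equiv.apply_symm_apply, add_sub_cancel_right]
  obtain ⟨w, hw⟩ := additive_bij_is_unit_mul g hgadd hgbij
  have hfx : ∀ x, f x = (w : ZMod (p^k)) * (x - c) + f c := by
    intro x
    have := hw (x - c)
    simp only [hg, sub_add_cancel] at this
    have h2 := congrArg (· + f c) this
    simpa [sub_add_cancel] using h2
  have key1 := hf 1 0
  rw [mul_one, mul_zero, sub_zero] at key1
  have hfac : f ((a : ZMod (p^k)) + c) = (w : ZMod (p^k)) * a + f c := by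
    rw [hfx ((a : ZMod (p^k)) + c)]
    ring_nf
  have hf1 : f 1 = (w : ZMod (p^k)) * (1 - c) + f c := hfx 1
  have hf0 : f 0 = (w : ZMod (p^k)) * (0 - c) + f c := hfx 0
  have haa : (w : ZMod (p^k)) * a = (a' : ZMod (p^k)) * w := by
    rw [hfac, hf1, hf0] at key1
    linear_combination key1 - hC
  have h2 : w * a = a' * w := Units.ext (by
    rw [Units.val_mul, Units.val_mul]; exact haa)
  rw [mul_comm a' w] at h2
  exact mul_left_cancel h2

lemma not_opIso_cform_nform (hk : 1 ≤ k) (hodd : Odd p)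
    (a a' : (ZMod (p^k))ˣ) (c c' : ZMod (p^k)) :
    ¬ OpIso (cform a c) (nform a' c') := by
  haveI := nontrivial_zmod (p := p) (k := k) hk
  rintro ⟨f, hf⟩
  simp only [cform, nform] at hf
  have hswap : ∀ x y : ZMod (p^k),
      (a' : ZMod (p^k)) * f x - (a' : ZMod (p^k)) * f y + c'
      = (a' : ZMod (p^k)) * f y - (a' : ZMod (p^k)) * f x + c' := by
    intro x y
    rw [← hf x y, ← hf y x]
    ring_nf
  set x₀ := f.symm (1 + f 0) with hx0
  have h1 := hswap x₀ 0
  rw [hx0, Equiv.apply_symm_apply] at h1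
  have h2 : 2 * (a' : ZMod (p^k)) = 0 := by linear_combination h1
  have h3 : IsUnit (2 * (a' : ZMod (p^k))) := (two_isUnit hodd).mul a'.isUnit
  rw [h2] at h3
  exact not_isUnit_zero h3

end PQ

namespace PQ

variable {p k : ℕ} [hp : Fact p.Prime]

lemma opIso_nform_self (a : (ZMod (p^k))ˣ) (c c' : ZMod (p^k)) :
    OpIso (nform a c) (nform a c') := by
  refine ⟨affEquiv 1 (c' - c), fun x y => ?_⟩
  simp only [affEquiv_apply, nform, Units.val_one, one_mul]
  ring

lemma opIso_cform_of (a : (ZMod (p^k))ˣ) (c c' : ZMod (p^k)) (u : (ZMod (p^k))ˣ)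
    (d : ZMod (p^k)) (hc : c' = (u : ZMod (p^k)) * c + (1 - 2 * (a : ZMod (p^k))) * d) :
    OpIso (cform a c) (cform a c') := by
  refine ⟨affEquiv u d, fun x y => ?_⟩
  simp only [affEquiv_apply, cform]
  rw [hc]
  ring

lemma val_one_sub_mul_ge (hk : 1 ≤ k) (z d : ZMod (p^k)) :
    val p k z ≤ val p k (z * d) ∨ z * d = 0 := by
  obtain ⟨w, hw⟩ := val_spec z
  set v := val p k z with hv
  rcases eq_or_ne (z * d) 0 with h | h
  · exact Or.inr h
  · left
    have : z * d = (w : ZMod (p^k)) * ((p : ZMod (p^k))^v * d) := by rw [hw]; ring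
    rw [this, val_mul_unit hk, val_p_pow_mul hk]
    have hvk : v ≤ k := hv ▸ val_le z
    omega

/-- `val (z*d) ≥ val z` always (with `val 0 = k ≥ everything`). -/
lemma val_mul_ge (hk : 1 ≤ k) (z d : ZMod (p^k)) :
    val p k z ≤ val p k (z * d) := by
  rcases val_one_sub_mul_ge hk z d with h | h
  · exact h
  · rw [h, val_zero']
    exact val_le z

/-- Invariance of `min (val c) (val (1-2a))` under the affine orbit relation. -/
lemma minval_congr (hk : 1 ≤ k) (z : ZMod (p^k)) (c c' : ZMod (p^k))
    (u : (ZMod (p^k))ˣ) (d : ZMod (p^k))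
    (hc : c' = (u : ZMod (p^k)) * c + z * d) :
    min (val p k c') (val p k z) = min (val p k c) (val p k z) := by
  set v := val p k z with hv
  have huc : val p k ((u : ZMod (p^k)) * c) = val p k c := val_mul_unit hk u c
  have hzd : v ≤ val p k (z * d) := val_mul_ge hk z d
  rcases lt_or_ge (val p k c) v with h | h
  · have h1 : val p k c' = val p k c := by
      rw [hc]
      rw [← huc] at h ⊢
      exact val_add_eq hk _ _ (by omega)
    omega
  · have h1 : v ≤ val p k c' := by
      rw [hc]
      have := val_add_ge hk ((u : ZMod (p^k)) * c) (z * d)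
      omega
    omega

/-- Converse: equal invariants give an affine relation. -/
lemma exists_affine_of_minval (hk : 1 ≤ k) (z : ZMod (p^k)) (c c' : ZMod (p^k))
    (h : min (val p k c) (val p k z) = min (val p k c') (val p k z)) :
    ∃ (u : (ZMod (p^k))ˣ) (d : ZMod (p^k)),
      c' = (u : ZMod (p^k)) * c + z * d := by
  set v := val p k z with hv
  rcases lt_or_ge (val p k c) v with hlt | hge
  · -- val c = val c' < v
    have hcc : val p k c' = val p k c := by omega
    obtain ⟨u₁, hu₁⟩ := val_spec c
    obtain ⟨u₂, hu₂⟩ := val_spec c'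
    refine ⟨u₂ * u₁⁻¹, 0, ?_⟩
    rw [mul_zero, add_zero, hu₁, hu₂, hcc]
    push_cast
    have : ((u₁⁻¹ : (ZMod (p^k))ˣ) : ZMod (p^k)) * u₁ = 1 := by
      norm_cast
      exact Units.inv_mul u₁
    calc (u₂ : ZMod (p^k)) * (p : ZMod (p^k)) ^ val p k c
        = (u₂ : ZMod (p^k)) * (((u₁⁻¹ : (ZMod (p^k))ˣ) : ZMod (p^k)) * u₁)
          * (p : ZMod (p^k)) ^ val p k c := by rw [this]; ring
      _ = (u₂ : ZMod (p^k)) * ((u₁⁻¹ : (ZMod (p^k))ˣ) : ZMod (p^k))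
          * ((u₁ : ZMod (p^k)) * (p : ZMod (p^k)) ^ val p k c) := by ring
  · -- v ≤ val c and v ≤ val c'
    have hge' : v ≤ val p k c' := by omega
    obtain ⟨w, hw⟩ := val_spec z
    have hdiff : v ≤ val p k (c' - c) := by
      have h1 := val_add_ge hk c' (-c)
      rw [val_neg hk] at h1
      have : c' - c = c' + (-c) := by ring
      rw [this]
      omega
    obtain ⟨u₃, hu₃⟩ := val_spec (c' - c)
    set m := val p k (c' - c) with hm
    refine ⟨1, ((w⁻¹ : (ZMod (p^k))ˣ) : ZMod (p^k)) * (u₃ : ZMod (p^k)) * (p : ZMod (p^k))^(m - v), ?_⟩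
    have hzd : z * (((w⁻¹ : (ZMod (p^k))ˣ) : ZMod (p^k)) * (u₃ : ZMod (p^k)) * (p : ZMod (p^k))^(m - v))
        = c' - c := by
      rw [hw, hu₃]
      have hpow : (p : ZMod (p^k))^v * (p : ZMod (p^k))^(m - v) = (p : ZMod (p^k))^m := by
        rw [← pow_add]
        congr 1
        omega
      calc (w : ZMod (p^k)) * (p : ZMod (p^k))^v *
            (((w⁻¹ : (ZMod (p^k))ˣ) : ZMod (p^k)) * (u₃ : ZMod (p^k)) * (p : ZMod (p^k))^(m - v))
          = ((w : ZMod (p^k)) * ((w⁻¹ : (ZMod (p^k))ˣ) : ZMod (p^k))) * (u₃ : ZMod (p^k))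
            * ((p : ZMod (p^k))^v * (p : ZMod (p^k))^(m - v)) := by ring
        _ = (u₃ : ZMod (p^k)) * (p : ZMod (p^k))^m := by
            rw [hpow, Units.mul_inv]
            ring
    rw [hzd]
    push_cast
    ring

lemma minval_p_pow (hk : 1 ≤ k) (j v : ℕ) (hjv : j ≤ v) (hvk : v ≤ k) :
    min (val p k ((p : ZMod (p^k))^j)) v = j := by
  rcases lt_or_ge j k with h | h
  · have h1 : val p k ((p : ZMod (p^k))^j) = j := by
      have := val_unit_mul_pow (p := p) (k := k) hk 1 j
      rw [Units.val_one, one_mul] at this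
      omega
    omega
  · have hjk : j = k := by omega
    have h1 : val p k ((p : ZMod (p^k))^j) = k := by
      rw [p_pow_zmod_eq_zero (le_of_eq hjk.symm), val_zero']
    omega

end PQ

namespace PQ

variable {p k : ℕ} [hp : Fact p.Prime]

lemma val_ge_iff_dvd (hk : 1 ≤ k) {t : ℕ} (ht : t ≤ k) (x : ZMod (p^k)) :
    t ≤ val p k x ↔ p^t ∣ x.val := by
  by_cases h0 : x = 0
  · subst h0
    simp [val_zero', ht, ZMod.val_zero]
  · have hvne : x.val ≠ 0 := fun h => h0 ((ZMod.val_eq_zero x).mp h)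
    rw [val]
    simp only [h0, if_false]
    exact (hp.out.pow_dvd_iff_le_factorization hvne).symm

lemma count_val_ge (hk : 1 ≤ k) {t : ℕ} (ht : t ≤ k) :
    (Finset.univ.filter (fun x : ZMod (p^k) => t ≤ val p k x)).card = p^(k-t) := by
  have hpk : 0 < p^k := pow_pos hp.out.pos k
  have hpt : 0 < p^t := pow_pos hp.out.pos t
  rw [show (Finset.univ.filter (fun x : ZMod (p^k) => t ≤ val p k x))
      = (Finset.univ.filter (fun x : ZMod (p^k) => p^t ∣ x.val)) from
    Finset.filter_congr (fun x _ => by rw [val_ge_iff_dvd hk ht])]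
  have hcb : (Finset.univ.filter (fun x : ZMod (p^k) => p^t ∣ x.val)).card
      = (Finset.range (p^(k-t))).card := by
    apply Finset.card_bij' (fun x _ => x.val / p^t)
      (fun m _ => ((p^t * m : ℕ) : ZMod (p^k)))
    · intro x hx
      simp only [Finset.mem_filter, Finset.mem_univ, true_and] at hx
      simp only [Finset.mem_range]
      have := ZMod.val_lt x
      rw [Nat.div_lt_iff_lt_mul hpt]
      calc x.val < p^k := this
        _ = p^(k-t) * p^t := by rw [← pow_add]; congr 1; omega
    · intro m hm
      simp only [Finset.mem_range] at hm
      simp only [Finset.mem_filter, Finset.mem_univ, true_and]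
      rw [ZMod.val_natCast, Nat.mod_eq_of_lt]
      · exact Dvd.intro m rfl
      · calc p^t * m < p^t * p^(k-t) := by
              exact (Nat.mul_lt_mul_left hpt).mpr hm
          _ = p^k := by rw [← pow_add]; congr 1; omega
    · intro x hx
      simp only [Finset.mem_filter, Finset.mem_univ, true_and] at hx
      rw [Nat.mul_div_cancel' hx, ZMod.natCast_val, ZMod.cast_id]
    · intro m hm
      simp only [Finset.mem_range] at hm
      rw [ZMod.val_natCast, Nat.mod_eq_of_lt, Nat.mul_div_cancel_left m hpt]
      calc p^t * m < p^t * p^(k-t) := (Nat.mul_lt_mul_left hpt).mpr hm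
        _ = p^k := by rw [← pow_add]; congr 1; omega
  rw [hcb, Finset.card_range]

lemma sum_val_univ (hk : 1 ≤ k) :
    ∑ x : ZMod (p^k), val p k x = ∑ i ∈ Finset.range k, p^i := by
  have h1 : ∀ x : ZMod (p^k), val p k x
      = ((Finset.range k).filter (fun j => j + 1 ≤ val p k x)).card := by
    intro x
    have hv : val p k x ≤ k := val_le x
    have : (Finset.range k).filter (fun j => j + 1 ≤ val p k x)
        = Finset.range (val p k x) := by
      ext j
      simp only [Finset.mem_filter, Finset.mem_range]
      omega
    rw [this, Finset.card_range]
  calc ∑ x : ZMod (p^k), val p k x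
      = ∑ x : ZMod (p^k), ∑ j ∈ Finset.range k, if j + 1 ≤ val p k x then 1 else 0 := by
        refine Finset.sum_congr rfl (fun x _ => ?_)
        conv_lhs => rw [h1 x]
        rw [Finset.card_filter]
    _ = ∑ j ∈ Finset.range k, ∑ x : ZMod (p^k), if j + 1 ≤ val p k x then 1 else 0 :=
        Finset.sum_comm
    _ = ∑ j ∈ Finset.range k, p^(k-(j+1)) := by
        refine Finset.sum_congr rfl (fun j hj => ?_)
        rw [← Finset.card_filter]
        exact count_val_ge hk (by simp only [Finset.mem_range] at hj; omega)
    _ = ∑ i ∈ Finset.range k, p^i := by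
        have := Finset.sum_range_reflect (fun i => p^i) k
        rw [← this]
        refine Finset.sum_congr rfl (fun j hj => ?_)
        simp only [Finset.mem_range] at hj
        congr 1
        omega

lemma sum_val_units (hk : 1 ≤ k) (hodd : Odd p) :
    ∑ a : (ZMod (p^k))ˣ, val p k (1 - 2 * (a : ZMod (p^k)))
      = ∑ i ∈ Finset.range k, p^i := by
  classical
  set e : (ZMod (p^k))ˣ → ZMod (p^k) := fun a => 1 - 2 * (a : ZMod (p^k)) with he
  have hinj : Function.Injective e := by
    intro a b hab
    simp only [he] at hab
    have h2 : 2 * (a : ZMod (p^k)) = 2 * (b : ZMod (p^k)) := by linear_combination -hab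
    have h3 : (a : ZMod (p^k)) = b := (two_isUnit (k := k) hodd).mul_left_cancel h2
    exact Units.ext h3
  have himg : ∑ a : (ZMod (p^k))ˣ, val p k (e a)
      = ∑ x ∈ Finset.univ.image e, val p k x := by
    rw [Finset.sum_image (fun a _ b _ h => hinj h)]
  have hout : ∀ x ∈ Finset.univ \ Finset.univ.image e, val p k x = 0 := by
    intro x hx
    simp only [Finset.mem_sdiff, Finset.mem_image, Finset.mem_univ, true_and] at hx
    by_contra hne
    have hvx : 1 ≤ val p k x := by omega
    -- then 1 - x is a unit and x ∈ image
    have hval1 : val p k (1 : ZMod (p^k)) = 0 := by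
      have := val_unit_mul_pow (p := p) (k := k) hk 1 0
      simpa using this
    have hvnx : val p k (-x) = val p k x := val_neg hk x
    have h1x : val p k (1 - x) = 0 := by
      have h2 : (1 : ZMod (p^k)) - x = 1 + (-x) := by ring
      rw [h2, val_add_eq hk 1 (-x) (by omega)]
      exact hval1
    have hu1x : IsUnit ((1 : ZMod (p^k)) - x) := (isUnit_iff_val_eq_zero hk _).mpr h1x
    set u2 := (two_isUnit (k := k) hodd).unit with hu2
    set ux := hu1x.unit with hux
    refine hx ⟨u2⁻¹ * ux, ?_⟩
    simp only [he]
    have hcoe2 : (u2 : ZMod (p^k)) = 2 := IsUnit.unit_spec _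
    have hcoeux : (ux : ZMod (p^k)) = 1 - x := IsUnit.unit_spec _
    push_cast
    rw [show ((u2⁻¹ : (ZMod (p^k))ˣ) : ZMod (p^k)) * (ux : ZMod (p^k))
        = ((u2⁻¹ : (ZMod (p^k))ˣ) : ZMod (p^k)) * (1 - x) from by rw [hcoeux]]
    have : (2 : ZMod (p^k)) * (((u2⁻¹ : (ZMod (p^k))ˣ) : ZMod (p^k)) * (1 - x))
        = (1 - x) := by
      rw [← hcoe2, ← mul_assoc, Units.mul_inv, one_mul]
    rw [this]
    ring
  calc ∑ a : (ZMod (p^k))ˣ, val p k (1 - 2 * (a : ZMod (p^k)))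
      = ∑ x ∈ Finset.univ.image e, val p k x := himg
    _ = ∑ x : ZMod (p^k), val p k x := by
        rw [← Finset.sum_subset (Finset.subset_univ _) (fun x _ hx =>
          hout x (Finset.mem_sdiff.mpr ⟨Finset.mem_univ x, hx⟩))]
    _ = ∑ i ∈ Finset.range k, p^i := sum_val_univ hk

end PQ

namespace PQ

variable (p k : ℕ) [hp : Fact p.Prime]

/-- Invariant/index type for isomorphism classes. -/
abbrev Inv : Type :=
  (ZMod (p^k))ˣ ⊕ (Σ a : (ZMod (p^k))ˣ, Fin (val p k (1 - 2 * (a : ZMod (p^k))) + 1))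

/-- Canonical representative of each class. -/
def rep : Inv p k → {op : ZMod (p^k) → ZMod (p^k) → ZMod (p^k) // IsAffineParamedialOp op}
  | .inl a => ⟨nform a 0, isAPO_nform a 0⟩
  | .inr ⟨a, j⟩ => ⟨cform a ((p : ZMod (p^k))^(j : ℕ)), isAPO_cform _ _⟩

variable {p k}

lemma rep_bijection (hk : 1 ≤ k) (hodd : Odd p) :
    Function.Bijective (fun i => Quot.mk
      (fun o₁ o₂ : {op : ZMod (p^k) → ZMod (p^k) → ZMod (p^k) // IsAffineParamedialOp op} =>
        OpIso o₁.1 o₂.1) (rep p k i)) := by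
  set R := fun o₁ o₂ : {op : ZMod (p^k) → ZMod (p^k) → ZMod (p^k) // IsAffineParamedialOp op} =>
    OpIso o₁.1 o₂.1 with hR
  have hEquiv : Equivalence R :=
    ⟨fun o => OpIso.refl o.1, fun h => OpIso.symm h, fun h₁ h₂ => OpIso.trans h₁ h₂⟩
  constructor
  · intro i j hij
    rw [Quot.eq, Equivalence.eqvGen_iff hEquiv] at hij
    match i, j with
    | .inl a, .inl a' =>
        have : OpIso (nform a 0) (nform a' 0) := hij
        rw [nform_iso_eq a a' 0 0 this]
    | .inl a, .inr ⟨a', j'⟩ =>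
        have h2 : OpIso (nform a 0) (cform a' ((p : ZMod (p^k))^(j' : ℕ))) := hij
        exact absurd (OpIso.symm h2) (not_opIso_cform_nform hk hodd _ _ _ _)
    | .inr ⟨a, j⟩, .inl a' =>
        have h2 : OpIso (cform a ((p : ZMod (p^k))^(j : ℕ))) (nform a' 0) := hij
        exact absurd h2 (not_opIso_cform_nform hk hodd _ _ _ _)
    | .inr ⟨a, j⟩, .inr ⟨a', j'⟩ =>
        have h2 : OpIso (cform a ((p : ZMod (p^k))^(j : ℕ)))
            (cform a' ((p : ZMod (p^k))^(j' : ℕ))) := hij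
        obtain ⟨haa, u, d, hc⟩ := cform_iso_affine _ _ _ _ h2
        subst haa
        have hjv : (j : ℕ) ≤ val p k (1 - 2 * (a : ZMod (p^k))) :=
          Nat.lt_succ_iff.mp j.isLt
        have hj'v : (j' : ℕ) ≤ val p k (1 - 2 * (a : ZMod (p^k))) :=
          Nat.lt_succ_iff.mp j'.isLt
        have hvk : val p k (1 - 2 * (a : ZMod (p^k))) ≤ k := val_le _
        have hmin := minval_congr hk (1 - 2 * (a : ZMod (p^k))) _ _ u d hc
        rw [minval_p_pow hk _ _ hjv hvk, minval_p_pow hk _ _ hj'v hvk] at hmin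
        have : j = j' := Fin.ext hmin.symm
        rw [this]
  · intro q
    obtain ⟨o, rfl⟩ := Quot.exists_rep q
    obtain ⟨a, c, hform | hform⟩ := forms_exhaust hk hodd o.2
    · -- commutative form
      set v := val p k (1 - 2 * (a : ZMod (p^k))) with hv
      have hvk : v ≤ k := hv ▸ val_le _
      set j := min (val p k c) v with hj
      have hjv : j ≤ v := by omega
      refine ⟨.inr ⟨a, ⟨j, by omega⟩⟩, Quot.sound ?_⟩
      show OpIso (cform a ((p : ZMod (p^k))^(j : ℕ))) o.1
      rw [hform]
      have hminp : min (val p k ((p : ZMod (p^k))^j)) v = j := minval_p_pow hk _ _ hjv hvk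
      obtain ⟨u, d, hc⟩ := exists_affine_of_minval hk (1 - 2 * (a : ZMod (p^k)))
        ((p : ZMod (p^k))^j) c (by rw [← hv, hminp, ← hj])
      exact opIso_cform_of a _ c u d hc
    · refine ⟨.inl a, Quot.sound ?_⟩
      show OpIso (nform a 0) o.1
      rw [hform]
      exact opIso_nform_self a 0 c

theorem pq_count (hk : 1 ≤ k) (hodd : Odd p) :
    pqG (ZMod (p^k)) = Fintype.card (Inv p k) := by
  have hb := rep_bijection (p := p) (k := k) hk hodd
  have h2 := Nat.card_eq_of_bijective _ hb
  rw [pqG, ← h2, Nat.card_eq_fintype_card]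

end PQ

namespace PQ

variable {p k : ℕ} [hp : Fact p.Prime]

lemma card_inv (hk : 1 ≤ k) (hodd : Odd p) :
    Fintype.card (Inv p k)
      = 2 * Fintype.card (ZMod (p^k))ˣ + ∑ i ∈ Finset.range k, p^i := by
  rw [show Fintype.card (Inv p k)
      = Fintype.card (ZMod (p^k))ˣ
        + ∑ a : (ZMod (p^k))ˣ, (val p k (1 - 2 * (a : ZMod (p^k))) + 1) from by
    simp [Inv, Fintype.card_sigma]]
  rw [Finset.sum_add_distrib, Finset.sum_const, Finset.card_univ, smul_eq_mul, mul_one]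
  rw [sum_val_units hk hodd]
  ring

end PQ


theorem pq_cyclic_odd_prime_power (p k : ℕ) (hp : p.Prime) (hodd : Odd p) (hk : 1 ≤ k) :
    pqG (ZMod (p ^ k)) =
      2 * p ^ k - p ^ (k - 1) + ∑ i ∈ Finset.range (k - 1), p ^ i := by
  haveI := Fact.mk hp
  rw [PQ.pq_count hk hodd, PQ.card_inv hk hodd]
  rw [ZMod.card_units_eq_totient, Nat.totient_prime_pow hp (by omega)]
  have hkk : k = (k - 1) + 1 := by omega
  have hsum : ∑ i ∈ Finset.range k, p^i
      = (∑ i ∈ Finset.range (k-1), p^i) + p^(k-1) := by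
    conv_lhs => rw [hkk]
    rw [Finset.sum_range_succ]
  have hBp : p^(k-1) * p = p^k := by
    rw [← pow_succ]
    congr 1
    omega
  have hBA : p^(k-1) ≤ p^k := Nat.pow_le_pow_right hp.pos (by omega)
  have hmul : p^(k-1) * (p - 1) = p^k - p^(k-1) := by
    have hp1 : 1 ≤ p := hp.pos
    calc p^(k-1) * (p-1) = p^(k-1) * p - p^(k-1) * 1 := by
          rw [Nat.mul_sub]
    _ = p^k - p^(k-1) := by rw [hBp, mul_one]
  rw [hmul, hsum]
  omega
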